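/- Let H be a finite-dimensional real inner product space, let β > 0, let f : H → ℝ ∪ {+∞} be proper, lower semicontinuous, and convex, let g : H → ℝ be convex and differentiable with β-Lipschitz gradient, and assume that f + g attains its minimum, with optimal value μ = min_{x ∈ H} (f(x) + g(x)). Let x₀ ∈ dom f, let 0 < ε < 1/β, let (γₙ) be a sequence in [ε, 2/β − ε], and define the proximal gradient iterates by xₙ₊₁ = prox_{γₙ f}(xₙ − γₙ ∇g(xₙ)). Then the sequence (f(xₙ) + g(xₙ)) is nonincreasing and converges to μ, and ∑ₙ (f(xₙ) + g(xₙ) − μ) < +∞. -/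

import Mathlib

open Filter Topology

open Set

set_option maxHeartbeats 1000000

noncomputable section

/-- Convexity for extended-real-valued functions. -/
def ConvexE {E : Type*} [AddCommGroup E] [Module ℝ E] (f : E → EReal) : Prop :=
  ∀ x y : E, ∀ a b : ℝ, 0 ≤ a → 0 ≤ b → a + b = 1 →
    f (a • x + b • y) ≤ (a : EReal) * f x + (b : EReal) * f y

private lemma pg_curve_hasDerivAt {H : Type*} [NormedAddCommGroup H] [InnerProductSpace ℝ H]
    [CompleteSpace H]
    {g : H → ℝ} {g' : H → H} (hg : ∀ z, HasGradientAt g (g' z) z) (x v : H) (t : ℝ) :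
    HasDerivAt (fun s : ℝ => g (x + s • v)) ((inner ℝ (g' (x + t • v)) v : ℝ)) t := by
  have hc : HasDerivAt (fun s : ℝ => x + s • v) v t := by
    simpa using ((hasDerivAt_id t).smul_const v).const_add x
  have h2 := ((hg (x + t • v)).hasFDerivAt).comp_hasDerivAt t hc
  simp [InnerProductSpace.toDual_apply_apply] at h2
  exact h2

private lemma pg_convex_grad_ineq {H : Type*} [NormedAddCommGroup H] [InnerProductSpace ℝ H]
    [CompleteSpace H]
    {g : H → ℝ} {g' : H → H} (hg_convex : ConvexOn ℝ Set.univ g)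
    (hg : ∀ z, HasGradientAt g (g' z) z) (x y : H) :
    g x + (inner ℝ (g' x) (y - x) : ℝ) ≤ g y := by
  set v := y - x with hv
  have hd : HasDerivAt (fun s : ℝ => g (x + s • v)) ((inner ℝ (g' x) v : ℝ)) 0 := by
    simpa using pg_curve_hasDerivAt hg x v 0
  have hslope : Tendsto (slope (fun s : ℝ => g (x + s • v)) 0) (𝓝[>] 0)
      (𝓝 ((inner ℝ (g' x) v : ℝ))) := by
    have := hasDerivAt_iff_tendsto_slope.1 hd
    exact this.mono_left (nhdsWithin_mono _ (fun t ht => ne_of_gt ht))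
  have hbound : ∀ᶠ t in 𝓝[>] (0:ℝ), slope (fun s : ℝ => g (x + s • v)) 0 t ≤ g y - g x := by
    filter_upwards [Ioc_mem_nhdsGT (zero_lt_one : (0:ℝ) < 1)] with t ht
    have ht0 : 0 < t := ht.1
    have hconv := hg_convex.2 (Set.mem_univ y) (Set.mem_univ x) (le_of_lt ht0)
      (by linarith [ht.2] : (0:ℝ) ≤ 1 - t) (by ring)
    have hpt : t • y + (1 - t) • x = x + t • v := by rw [hv]; module
    rw [hpt, smul_eq_mul, smul_eq_mul] at hconv
    rw [slope_def_field, div_le_iff₀ (by simpa using ht0)]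
    simp only [zero_smul, add_zero, sub_zero]
    nlinarith
  have hle : (inner ℝ (g' x) v : ℝ) ≤ g y - g x := le_of_tendsto hslope hbound
  linarith

private lemma pg_descent_lemma {H : Type*} [NormedAddCommGroup H] [InnerProductSpace ℝ H]
    [CompleteSpace H] {β : ℝ}
    {g : H → ℝ} {g' : H → H}
    (hg : ∀ z, HasGradientAt g (g' z) z)
    (hlip : ∀ z w : H, ‖g' z - g' w‖ ≤ β * ‖z - w‖) (x y : H) :
    g y ≤ g x + (inner ℝ (g' x) (y - x) : ℝ) + β / 2 * ‖y - x‖ ^ 2 := by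
  set v := y - x with hv
  set ψ : ℝ → ℝ := fun t => g (x + t • v) - (inner ℝ (g' x) v : ℝ) * t - β / 2 * ‖v‖ ^ 2 * t ^ 2
    with hψ
  have hψd : ∀ t : ℝ, HasDerivAt ψ
      ((inner ℝ (g' (x + t • v)) v : ℝ) - (inner ℝ (g' x) v : ℝ) - β / 2 * ‖v‖ ^ 2 * (2 * t)) t := by
    intro t
    have hq : HasDerivAt (fun s : ℝ => β / 2 * ‖v‖ ^ 2 * s ^ 2) (β / 2 * ‖v‖ ^ 2 * (2 * t)) t := by
      simpa using (hasDerivAt_pow 2 t).const_mul (β / 2 * ‖v‖ ^ 2)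
    have hl : HasDerivAt (fun s : ℝ => (inner ℝ (g' x) v : ℝ) * s) ((inner ℝ (g' x) v : ℝ)) t := by
      simpa using (hasDerivAt_id t).const_mul ((inner ℝ (g' x) v : ℝ))
    exact ((pg_curve_hasDerivAt hg x v t).sub hl).sub hq
  have hanti : AntitoneOn ψ (Icc (0:ℝ) 1) := by
    apply antitoneOn_of_deriv_nonpos (convex_Icc 0 1)
    · exact (Continuous.continuousOn (by
        exact continuous_iff_continuousAt.2 fun t => (hψd t).continuousAt))
    · exact fun t _ => (hψd t).differentiableAt.differentiableWithinAt
    · intro t ht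
      rw [interior_Icc] at ht
      rw [(hψd t).deriv]
      have h1 : (inner ℝ (g' (x + t • v)) v : ℝ) - (inner ℝ (g' x) v : ℝ)
          = (inner ℝ (g' (x + t • v) - g' x) v : ℝ) := by rw [inner_sub_left]
      have h2 : (inner ℝ (g' (x + t • v) - g' x) v : ℝ) ≤ ‖g' (x + t • v) - g' x‖ * ‖v‖ :=
        real_inner_le_norm _ _
      have h3 : ‖g' (x + t • v) - g' x‖ ≤ β * ‖t • v‖ := by
        have := hlip (x + t • v) x
        simpa using this
      have h4 : ‖t • v‖ = t * ‖v‖ := by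
        rw [norm_smul, Real.norm_eq_abs, abs_of_pos ht.1]
      have h5 := mul_le_mul_of_nonneg_right h3 (norm_nonneg v)
      rw [h4] at h5
      nlinarith [norm_nonneg v, ht.1.le]
  have h01 := hanti (Set.left_mem_Icc.2 zero_le_one) (Set.right_mem_Icc.2 zero_le_one)
    zero_le_one
  have hψ0 : ψ 0 = g x := by simp [hψ]
  have hψ1 : ψ 1 = g y - (inner ℝ (g' x) v : ℝ) - β / 2 * ‖v‖ ^ 2 := by
    simp [hψ, hv]
  rw [hψ0, hψ1] at h01
  linarith

/-- Monotone convergence of the values along the proximal gradient iterates: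
`f(xₙ) + g(xₙ)` is real-valued, nonincreasing, converges to the optimal value `μ`,
and `∑ₙ (f(xₙ) + g(xₙ) - μ) < +∞`. -/
theorem proximal_gradient_value_convergence
    {H : Type*} [NormedAddCommGroup H] [InnerProductSpace ℝ H] [FiniteDimensional ℝ H]
    (β : ℝ) (hβ : 0 < β)
    (f : H → EReal)
    (hf_proper : ∃ z, f z ≠ ⊤) (hf_ne_bot : ∀ z, f z ≠ ⊥)
    (hf_lsc : LowerSemicontinuous f) (hf_convex : ConvexE f)
    (g : H → ℝ) (g' : H → H)
    (hg_convex : ConvexOn ℝ Set.univ g)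
    (hg_grad : ∀ z : H, HasGradientAt g (g' z) z)
    (hg_lip : ∀ z w : H, ‖g' z - g' w‖ ≤ β * ‖z - w‖)
    (xstar : H)
    (hxstar : ∀ y : H, f xstar + (g xstar : EReal) ≤ f y + (g y : EReal))
    (μ : ℝ) (hμ : (μ : EReal) = f xstar + (g xstar : EReal))
    (ε : ℝ) (hε : 0 < ε) (hεβ : ε < 1/β)
    (γ : ℕ → ℝ) (hγ : ∀ n, γ n ∈ Set.Icc ε (2/β - ε))
    (x : ℕ → H) (hx0 : f (x 0) ≠ ⊤)
    (hiter : ∀ n, ∀ y : H,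
      (γ n : EReal) * f (x (n+1)) +
          ((1/2 * ‖(x n - γ n • g' (x n)) - x (n+1)‖^2 : ℝ) : EReal) ≤
        (γ n : EReal) * f y +
          ((1/2 * ‖(x n - γ n • g' (x n)) - y‖^2 : ℝ) : EReal)) :
    ∃ φ : ℕ → ℝ,
      (∀ n, (φ n : EReal) = f (x n) + (g (x n) : EReal)) ∧
      Antitone φ ∧
      Tendsto φ atTop (𝓝 μ) ∧
      Summable (fun n => φ n - μ) := by
  have hγpos : ∀ n, 0 < γ n := fun n => lt_of_lt_of_le hε (hγ n).1
  have h1β : (0:ℝ) < 1/β := by positivity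
  have hΓpos : (0:ℝ) < 2/β - ε := by
    have : (2:ℝ)/β = 1/β + 1/β := by ring
    linarith
  -- finiteness of f along iterates
  have hfin : ∀ n, f (x n) ≠ ⊤ := by
    intro n
    induction n with
    | zero => exact hx0
    | succ n ih =>
      intro htop
      have h := hiter n (x n)
      rw [htop, (EReal.coe_toReal ih (hf_ne_bot _)).symm, ← EReal.coe_mul, ← EReal.coe_add,
        EReal.coe_mul_top_of_pos (hγpos n), EReal.top_add_coe] at h
      exact EReal.coe_ne_top _ (top_le_iff.1 h)
  obtain ⟨fx, hfxdef⟩ : ∃ fx : ℕ → ℝ, fx = fun n => (f (x n)).toReal := ⟨_, rfl⟩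
  have hfx : ∀ n, f (x n) = ((fx n : ℝ) : EReal) := by
    intro n; rw [hfxdef]; exact (EReal.coe_toReal (hfin n) (hf_ne_bot _)).symm
  -- xstar value
  have hfstop : f xstar ≠ ⊤ := by
    intro h
    rw [h, EReal.top_add_coe] at hμ
    exact EReal.coe_ne_top μ hμ
  obtain ⟨fs, hfsdef⟩ : ∃ fs : ℝ, fs = (f xstar).toReal := ⟨_, rfl⟩
  have hfs : f xstar = ((fs : ℝ) : EReal) := by
    rw [hfsdef]; exact (EReal.coe_toReal hfstop (hf_ne_bot _)).symm
  have hμ' : μ = fs + g xstar := by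
    rw [hfs, ← EReal.coe_add, EReal.coe_eq_coe_iff] at hμ
    exact hμ
  -- real form of the prox inequality
  have hiter_real : ∀ n, ∀ y : H, ∀ ry : ℝ, f y = ((ry : ℝ) : EReal) →
      γ n * fx (n+1) + 1/2 * ‖(x n - γ n • g' (x n)) - x (n+1)‖^2 ≤
        γ n * ry + 1/2 * ‖(x n - γ n • g' (x n)) - y‖^2 := by
    intro n y ry hy
    have h := hiter n y
    rw [hfx (n+1), hy, ← EReal.coe_mul, ← EReal.coe_mul, ← EReal.coe_add, ← EReal.coe_add,
      EReal.coe_le_coe_iff] at h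
    exact h
  -- subgradient inequality
  have hsub : ∀ n, ∀ y : H, ∀ ry : ℝ, f y = ((ry : ℝ) : EReal) →
      (inner ℝ ((x n - γ n • g' (x n)) - x (n+1)) (y - x (n+1)) : ℝ) ≤
        γ n * (ry - fx (n+1)) := by
    intro n y ry hy
    have hgoal : ∀ t : ℝ, t ∈ Set.Ioc (0:ℝ) 1 →
        (inner ℝ ((x n - γ n • g' (x n)) - x (n+1)) (y - x (n+1)) : ℝ) ≤
          γ n * (ry - fx (n+1)) + t * (‖y - x (n+1)‖^2 / 2) := by
      intro t ht
      have ht0 : (0:ℝ) < t := ht.1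
      have hyt : f (x (n+1) + t • (y - x (n+1))) ≤
          ((t * ry + (1-t) * fx (n+1) : ℝ) : EReal) := by
        have hc := hf_convex y (x (n+1)) t (1-t) ht0.le (by linarith [ht.2]) (by ring)
        have hpt : t • y + (1 - t) • x (n+1) = x (n+1) + t • (y - x (n+1)) := by module
        rw [hpt] at hc
        calc f (x (n+1) + t • (y - x (n+1)))
            ≤ (t : EReal) * f y + ((1-t : ℝ) : EReal) * f (x (n+1)) := hc
          _ = _ := by
              rw [hy, hfx (n+1), ← EReal.coe_mul, ← EReal.coe_mul, ← EReal.coe_add]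
      have hne : f (x (n+1) + t • (y - x (n+1))) ≠ ⊤ := by
        intro h
        rw [h] at hyt
        exact EReal.coe_ne_top _ (top_le_iff.1 hyt)
      obtain ⟨s, hsdef⟩ : ∃ s : ℝ, s = (f (x (n+1) + t • (y - x (n+1)))).toReal := ⟨_, rfl⟩
      have hrepr : f (x (n+1) + t • (y - x (n+1))) = ((s : ℝ) : EReal) := by
        rw [hsdef]; exact (EReal.coe_toReal hne (hf_ne_bot _)).symm
      have hsle : s ≤ t * ry + (1-t) * fx (n+1) := by
        rw [hrepr, EReal.coe_le_coe_iff] at hyt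
        exact hyt
      have h2 := hiter_real n (x (n+1) + t • (y - x (n+1))) s hrepr
      have hxp : (x n - γ n • g' (x n)) - (x (n+1) + t • (y - x (n+1)))
          = ((x n - γ n • g' (x n)) - x (n+1)) - t • (y - x (n+1)) := by module
      rw [hxp] at h2
      have hexp : ‖((x n - γ n • g' (x n)) - x (n+1)) - t • (y - x (n+1))‖^2
          = ‖(x n - γ n • g' (x n)) - x (n+1)‖^2
            - 2 * (t * (inner ℝ ((x n - γ n • g' (x n)) - x (n+1)) (y - x (n+1)) : ℝ))
            + t^2 * ‖y - x (n+1)‖^2 := by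
        rw [norm_sub_sq_real, real_inner_smul_right, norm_smul, mul_pow, Real.norm_eq_abs,
          sq_abs]
      rw [hexp] at h2
      have h3 := mul_le_mul_of_nonneg_left hsle (hγpos n).le
      have htineq : t * (inner ℝ ((x n - γ n • g' (x n)) - x (n+1)) (y - x (n+1)) : ℝ)
          ≤ t * (γ n * (ry - fx (n+1)) + t * (‖y - x (n+1)‖^2 / 2)) := by nlinarith
      exact le_of_mul_le_mul_left htineq ht0
    have htend : Tendsto (fun t : ℝ => γ n * (ry - fx (n+1)) + t * (‖y - x (n+1)‖^2 / 2))
        (𝓝[>] 0) (𝓝 (γ n * (ry - fx (n+1)))) := by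
      have hc : Continuous (fun t : ℝ => γ n * (ry - fx (n+1)) + t * (‖y - x (n+1)‖^2 / 2)) :=
        continuous_const.add (continuous_id.mul continuous_const)
      have h := (hc.tendsto 0).mono_left (nhdsWithin_le_nhds (s := Set.Ioi (0:ℝ)))
      simpa using h
    exact ge_of_tendsto htend (by
      filter_upwards [Ioc_mem_nhdsGT (zero_lt_one : (0:ℝ) < 1)] with t ht
      exact hgoal t ht)
  -- the value sequence
  obtain ⟨φ, hφdef⟩ : ∃ φ : ℕ → ℝ, φ = fun n => fx n + g (x n) := ⟨_, rfl⟩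
  have hμφ : ∀ n, μ ≤ φ n := by
    intro n
    have h := hxstar (x n)
    rw [← hμ, hfx n, ← EReal.coe_add, EReal.coe_le_coe_iff] at h
    rw [hφdef]; exact h
  have hkey1 : ∀ n, γ n * φ (n+1) + (1 - γ n * (β/2)) * ‖x n - x (n+1)‖^2 ≤ γ n * φ n := by
    intro n
    have hS := hsub n (x n) (fx n) (hfx n)
    have hin : (x n - γ n • g' (x n)) - x (n+1) = (x n - x (n+1)) - γ n • g' (x n) := by
      module
    rw [hin, inner_sub_left, real_inner_smul_left, real_inner_self_eq_norm_sq] at hS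
    have hD := pg_descent_lemma hg_grad hg_lip (x n) (x (n+1))
    rw [show x (n+1) - x n = -(x n - x (n+1)) by abel, inner_neg_right, norm_neg] at hD
    have hDγ := mul_le_mul_of_nonneg_left hD (hγpos n).le
    simp only [hφdef]
    linarith only [hS, hDγ]
  have hcoef : ∀ n, ε * β / 2 ≤ 1 - γ n * (β/2) := by
    intro n
    have h2 := (hγ n).2
    have hb : (2/β - ε) * (β/2) = 1 - ε * β / 2 := by field_simp
    nlinarith [mul_le_mul_of_nonneg_right h2 (le_of_lt (by positivity : (0:ℝ) < β/2))]
  have hδpos : (0:ℝ) < ε * β / 2 := by positivity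
  have hmono : ∀ n, φ (n+1) ≤ φ n := by
    intro n
    have h := hkey1 n
    have hc := hcoef n
    have hnn : (0:ℝ) ≤ ‖x n - x (n+1)‖^2 := sq_nonneg _
    have hp : 0 ≤ (1 - γ n * (β/2)) * ‖x n - x (n+1)‖^2 :=
      mul_nonneg (by linarith) hnn
    have hm : γ n * φ (n+1) ≤ γ n * φ n := by linarith only [h, hp]
    exact le_of_mul_le_mul_left hm (hγpos n)
  obtain ⟨Γδ, hΓδdef⟩ : ∃ c : ℝ, c = (2/β - ε)/(ε * β / 2) := ⟨_, rfl⟩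
  have hΓδnn : 0 ≤ Γδ := hΓδdef ▸ div_nonneg hΓpos.le hδpos.le
  have hΔ2 : ∀ n, ‖x n - x (n+1)‖^2 ≤ Γδ * (φ n - φ (n+1)) := by
    intro n
    have h := hkey1 n
    have hc := hcoef n
    have hnn : (0:ℝ) ≤ ‖x n - x (n+1)‖^2 := sq_nonneg _
    have h5 : (ε * β / 2) * ‖x n - x (n+1)‖^2 ≤ γ n * (φ n - φ (n+1)) := by nlinarith
    have h6 : γ n * (φ n - φ (n+1)) ≤ (2/β - ε) * (φ n - φ (n+1)) := by
      have hp : 0 ≤ (2/β - ε - γ n) * (φ n - φ (n+1)) :=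
        mul_nonneg (by linarith [(hγ n).2]) (by linarith [hmono n])
      nlinarith [hp]
    rw [hΓδdef, div_mul_eq_mul_div, le_div_iff₀ hδpos]
    nlinarith
  have hγβ2 : ∀ n, γ n * β ≤ 2 := by
    intro n
    have h2 := (hγ n).2
    have hb : (2/β) * β = 2 := by field_simp
    nlinarith [mul_le_mul_of_nonneg_right h2 hβ.le]
  have hkey2 : ∀ n, γ n * (φ (n+1) - μ) ≤
      1/2 * ‖x n - xstar‖^2 - 1/2 * ‖x (n+1) - xstar‖^2 + ‖x n - x (n+1)‖^2 := by
    intro n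
    have hS := hsub n xstar fs hfs
    have hin : (x n - γ n • g' (x n)) - x (n+1) = (x n - x (n+1)) - γ n • g' (x n) := by
      module
    rw [hin, inner_sub_left, real_inner_smul_left] at hS
    have hu : (inner ℝ (g' (x n)) (xstar - x (n+1)) : ℝ)
        = (inner ℝ (g' (x n)) (xstar - x n) : ℝ) + (inner ℝ (g' (x n)) (x n - x (n+1)) : ℝ) := by
      rw [← inner_add_right]
      congr 1
      abel
    have hP : (inner ℝ (x n - x (n+1)) (xstar - x (n+1)) : ℝ)
        = -(inner ℝ (x n - x (n+1)) (x (n+1) - xstar) : ℝ) := by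
      rw [show xstar - x (n+1) = -(x (n+1) - xstar) by abel, inner_neg_right]
    rw [hu, hP] at hS
    have hD := pg_descent_lemma hg_grad hg_lip (x n) (x (n+1))
    rw [show x (n+1) - x n = -(x n - x (n+1)) by abel, inner_neg_right, norm_neg] at hD
    have hC := pg_convex_grad_ineq hg_convex hg_grad (x n) xstar
    have hDγ := mul_le_mul_of_nonneg_left hD (hγpos n).le
    have hCγ := mul_le_mul_of_nonneg_left hC (hγpos n).le
    have hid : ‖x n - xstar‖^2 = ‖x n - x (n+1)‖^2
        + 2 * (inner ℝ (x n - x (n+1)) (x (n+1) - xstar) : ℝ) + ‖x (n+1) - xstar‖^2 := by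
      rw [show x n - xstar = (x n - x (n+1)) + (x (n+1) - xstar) by abel, norm_add_sq_real]
    have hprod : 0 ≤ (2 - γ n * β) * ‖x n - x (n+1)‖^2 :=
      mul_nonneg (by linarith [hγβ2 n]) (sq_nonneg _)
    rw [hμ']
    simp only [hφdef]
    linarith only [hS, hDγ, hCγ, hid, hprod, sq_nonneg ‖x n - x (n+1)‖]
  -- summation bounds
  have hsum1 : ∀ N, ∑ n ∈ Finset.range N, ‖x n - x (n+1)‖^2 ≤ Γδ * (φ 0 - μ) := by
    intro N
    calc ∑ n ∈ Finset.range N, ‖x n - x (n+1)‖^2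
        ≤ ∑ n ∈ Finset.range N, Γδ * (φ n - φ (n+1)) :=
          Finset.sum_le_sum fun n _ => hΔ2 n
      _ = Γδ * (φ 0 - φ N) := by
          rw [← Finset.mul_sum, Finset.sum_range_sub' (fun k => φ k)]
      _ ≤ Γδ * (φ 0 - μ) := by nlinarith [hμφ N]
  have e1 : ∀ N : ℕ, ∑ n ∈ Finset.range N,
      (1/2 * ‖x n - xstar‖^2 - 1/2 * ‖x (n+1) - xstar‖^2)
      = 1/2 * ‖x 0 - xstar‖^2 - 1/2 * ‖x N - xstar‖^2 :=
    fun N => Finset.sum_range_sub' (fun k => 1/2 * ‖x k - xstar‖^2) N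
  have hsum2 : ∀ N, ∑ n ∈ Finset.range N, (φ (n+1) - μ)
      ≤ (1/2 * ‖x 0 - xstar‖^2 + Γδ * (φ 0 - μ)) / ε := by
    intro N
    have hterm : ∀ n, ε * (φ (n+1) - μ) ≤
        (1/2 * ‖x n - xstar‖^2 - 1/2 * ‖x (n+1) - xstar‖^2) + ‖x n - x (n+1)‖^2 := by
      intro n
      have h1 := hkey2 n
      have h2 : ε * (φ (n+1) - μ) ≤ γ n * (φ (n+1) - μ) :=
        mul_le_mul_of_nonneg_right (hγ n).1 (by linarith [hμφ (n+1)])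
      exact le_trans h2 h1
    have hmain : ε * ∑ n ∈ Finset.range N, (φ (n+1) - μ)
        ≤ 1/2 * ‖x 0 - xstar‖^2 + Γδ * (φ 0 - μ) := by
      calc ε * ∑ n ∈ Finset.range N, (φ (n+1) - μ)
          = ∑ n ∈ Finset.range N, ε * (φ (n+1) - μ) := Finset.mul_sum _ _ _
        _ ≤ ∑ n ∈ Finset.range N,
              ((1/2 * ‖x n - xstar‖^2 - 1/2 * ‖x (n+1) - xstar‖^2) + ‖x n - x (n+1)‖^2) :=
            Finset.sum_le_sum fun n _ => hterm n
        _ = (1/2 * ‖x 0 - xstar‖^2 - 1/2 * ‖x N - xstar‖^2)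
              + ∑ n ∈ Finset.range N, ‖x n - x (n+1)‖^2 := by
            rw [Finset.sum_add_distrib, e1 N]
        _ ≤ 1/2 * ‖x 0 - xstar‖^2 + Γδ * (φ 0 - μ) := by
            have := hsum1 N
            nlinarith [sq_nonneg ‖x N - xstar‖]
    rw [le_div_iff₀ hε]
    linarith
  have hnn : ∀ n, 0 ≤ φ (n+1) - μ := fun n => by linarith [hμφ (n+1)]
  have hs1 : Summable (fun n => φ (n+1) - μ) := summable_of_sum_range_le hnn hsum2
  have hsummable : Summable (fun n => φ n - μ) := (summable_nat_add_iff 1).1 hs1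
  have htend : Tendsto φ atTop (𝓝 μ) := by
    have h0 := hsummable.tendsto_atTop_zero
    have h1 : Tendsto (fun n => (φ n - μ) + μ) atTop (𝓝 (0 + μ)) := h0.add_const μ
    simpa using h1
  refine ⟨φ, fun n => ?_, antitone_nat_of_succ_le hmono, htend, hsummable⟩
  rw [hfx n, ← EReal.coe_add, hφdef]
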